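/- Let α > 2 and u_α(x) = ∫₀ˣ √(((α-2)/2 · t² + 1)^{2/(α-2)} − 1) dt. Then u_α satisfies the differential equation u_α''(x)·u_α'(x)/(x·(1+u_α'(x)²)²) = (1+u_α'(x)²)^{-α/2} for all x > 0. -/

import Mathlib

open Real intervalIntegral

/-- For `α > 2`, the profile function
`u_α(x) = ∫₀ˣ √(((α-2)/2·t² + 1)^(2/(α-2)) − 1) dt` satisfies the prescribed Gauss curvature
equation `u''u'/(x(1+u'²)²) = (1+u'²)^(-α/2)` for all `x > 0`, i.e. the rotated graph of `u_α`
is a `𝔎`-surface for `𝔎(y) = y^α`. -/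
theorem profile_alpha_gt_two_ode (α : ℝ) (hα : 2 < α) (u : ℝ → ℝ)
    (hu : ∀ x : ℝ, u x =
      ∫ t in (0:ℝ)..x, Real.sqrt (((α - 2) / 2 * t ^ 2 + 1) ^ (2 / (α - 2)) - 1)) :
    ∀ x : ℝ, 0 < x →
      deriv (deriv u) x * deriv u x / (x * (1 + (deriv u x) ^ 2) ^ 2) =
        (1 + (deriv u x) ^ 2) ^ (-(α / 2)) := by
  have hα2 : (0:ℝ) < α - 2 := by linarith
  set c : ℝ := 2 / (α - 2) with hc
  have hcpos : 0 < c := by positivity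
  set B : ℝ → ℝ := fun t => (α - 2) / 2 * t ^ 2 + 1 with hB
  set f : ℝ → ℝ := fun t => Real.sqrt (B t ^ c - 1) with hf
  have hBpos : ∀ t, 0 < B t := fun t => by positivity
  have hfc : Continuous f := by
    apply Continuous.sqrt
    apply Continuous.sub _ continuous_const
    exact (by continuity : Continuous B).rpow_const (fun t => Or.inr hcpos.le)
  have hderiv : deriv u = f := by
    funext y
    have : u = fun y => ∫ t in (0:ℝ)..y, f t := funext hu
    rw [this, hfc.deriv_integral f 0 y]
  intro x hx
  rw [hderiv]
  have hB1 : 1 < B x := by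
    have : 0 < (α - 2) / 2 * x ^ 2 := by positivity
    simp only [hB]; linarith
  have hgpos : 0 < B x ^ c - 1 := by
    have := Real.one_lt_rpow_iff_of_pos (hBpos x) (y := c)
    simp [this, hB1, hcpos]
  -- derivative of f at x
  have hBd : HasDerivAt B ((α - 2) * x) x := by
    have h1 : HasDerivAt (fun t : ℝ => t ^ 2) (2 * x ^ 1) x := hasDerivAt_pow 2 x
    have := (h1.const_mul ((α - 2) / 2)).add_const 1
    exact this.congr_deriv (by ring)
  have hgd : HasDerivAt (fun t => B t ^ c - 1) (c * B x ^ (c - 1) * ((α - 2) * x)) x := by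
    have := (hBd.rpow_const (p := c) (Or.inl (hBpos x).ne')).sub_const 1
    exact this.congr_deriv (by ring)
  have hfd : HasDerivAt f (c * B x ^ (c - 1) * ((α - 2) * x) / (2 * Real.sqrt (B x ^ c - 1))) x :=
    hgd.sqrt hgpos.ne'
  rw [hfd.deriv]
  have hsq : Real.sqrt (B x ^ c - 1) ^ 2 = B x ^ c - 1 := Real.sq_sqrt hgpos.le
  have hone : 1 + Real.sqrt (B x ^ c - 1) ^ 2 = B x ^ c := by rw [hsq]; ring
  rw [hone]
  have hce : c * (α - 2) = 2 := by
    rw [hc, div_mul_cancel₀ _ hα2.ne']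
  have hsqrtpos : 0 < Real.sqrt (B x ^ c - 1) := Real.sqrt_pos.mpr hgpos
  have hnum : c * B x ^ (c - 1) * ((α - 2) * x) / (2 * Real.sqrt (B x ^ c - 1)) *
      Real.sqrt (B x ^ c - 1) = x * B x ^ (c - 1) := by
    field_simp
    linear_combination hce
  rw [hnum]
  have hBc2 : (B x ^ c) ^ 2 = B x ^ (2 * c) := by
    rw [← Real.rpow_natCast (B x ^ c) 2, ← Real.rpow_mul (hBpos x).le]
    norm_num [mul_comm]
  have hBcα : (B x ^ c) ^ (-(α / 2)) = B x ^ (c * (-(α / 2))) := by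
    rw [← Real.rpow_mul (hBpos x).le]
  rw [hBc2, hBcα]
  have : x * B x ^ (c - 1) / (x * B x ^ (2 * c)) = B x ^ (c - 1 - 2 * c) := by
    rw [mul_div_mul_left _ _ hx.ne', ← Real.rpow_sub (hBpos x)]
  rw [this]
  congr 1
  field_simp [hc]
  ring
  linear_combination hce
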